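/- arXiv:2112.05836 — 4 statements merged into one kernel-verified Lean document; each statement's English description precedes it below -/
import Mathlib

section
/- Let k ≥ 1 and let S_1, …, S_k be strings over an alphabet Σ, each of length M, and let γ denote the empty string. Then the median edit distance of the (2k−1)-tuple consisting of S_1, …, S_k together with k−1 copies of γ satisfies δ_E(S_1, …, S_k, γ, …, γ) = M·k − LCS(S_1, …, S_k). -/
/-- Costs of the edit operations (removed from Mathlib; restored with its old meaning). -/
structure Levenshtein.Cost (α β δ : Type*) where
  delete : α → δ
  insert : β → δ
  substitute : α → β → δ

/-- The default cost structure: each insertion, deletion or substitution of unequal letters costs 1. -/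
def Levenshtein.defaultCost {α : Type*} [DecidableEq α] : Levenshtein.Cost α α ℕ where
  delete _ := 1
  insert _ := 1
  substitute a b := if a = b then 0 else 1

/-- The Levenshtein distance with cost structure `C` (old Mathlib `levenshtein`, by its
characterizing recursion). -/
def levenshtein {α β δ : Type*} [AddZeroClass δ] [Min δ] (C : Levenshtein.Cost α β δ) :
    List α → List β → δ
  | [], ys => (ys.map C.insert).sum
  | x :: xs, [] => ((x :: xs).map C.delete).sum
  | x :: xs, y :: ys =>
    min (C.delete x + levenshtein C xs (y :: ys))
      (min (C.insert y + levenshtein C (x :: xs) ys) (C.substitute x y + levenshtein C xs ys))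

@[simp] lemma Levenshtein.defaultCost_delete {α : Type*} [DecidableEq α] (a : α) :
    (Levenshtein.defaultCost : Levenshtein.Cost α α ℕ).delete a = 1 := rfl

@[simp] lemma Levenshtein.defaultCost_insert {α : Type*} [DecidableEq α] (a : α) :
    (Levenshtein.defaultCost : Levenshtein.Cost α α ℕ).insert a = 1 := rfl

@[simp] lemma Levenshtein.defaultCost_substitute {α : Type*} [DecidableEq α] (a b : α) :
    (Levenshtein.defaultCost : Levenshtein.Cost α α ℕ).substitute a b = if a = b then 0 else 1 := rfl

@[simp] lemma levenshtein_nil_nil {α β δ : Type*} [AddZeroClass δ] [Min δ]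
    (C : Levenshtein.Cost α β δ) : levenshtein C [] [] = 0 := by
  simp [levenshtein]

@[simp] lemma levenshtein_nil_cons {α β δ : Type*} [AddZeroClass δ] [Min δ]
    (C : Levenshtein.Cost α β δ) (y : β) (ys : List β) :
    levenshtein C [] (y :: ys) = C.insert y + levenshtein C [] ys := by
  simp [levenshtein]

@[simp] lemma levenshtein_cons_nil {α β δ : Type*} [AddZeroClass δ] [Min δ]
    (C : Levenshtein.Cost α β δ) (x : α) (xs : List α) :
    levenshtein C (x :: xs) [] = C.delete x + levenshtein C xs [] := by
  cases xs <;> simp [levenshtein]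

@[simp] lemma levenshtein_cons_cons {α β δ : Type*} [AddZeroClass δ] [Min δ]
    (C : Levenshtein.Cost α β δ) (x : α) (xs : List α) (y : β) (ys : List β) :
    levenshtein C (x :: xs) (y :: ys) =
      min (C.delete x + levenshtein C xs (y :: ys))
        (min (C.insert y + levenshtein C (x :: xs) ys) (C.substitute x y + levenshtein C xs ys)) := by
  rw [levenshtein]

/-- The Levenshtein edit distance between two strings. -/
def editDist {α : Type*} [DecidableEq α] (s t : List α) : ℕ :=
  levenshtein Levenshtein.defaultCost s t

/-- The median edit distance of a family of strings:
the minimum over target strings `T` of the sum of edit distances to `T`. -/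
noncomputable def medianED {α : Type*} [DecidableEq α] (L : List (List α)) : ℕ :=
  sInf { d : ℕ | ∃ T : List α, d = (L.map fun s => editDist s T).sum }

/-- The length of a longest common subsequence of a family of strings. -/
noncomputable def lcsLen {α : Type*} (L : List (List α)) : ℕ :=
  sSup { m : ℕ | ∃ T : List α, T.length = m ∧ ∀ s ∈ L, T.Sublist s }

lemma editDist_nil_left {α : Type*} [DecidableEq α] (t : List α) :
    editDist ([] : List α) t = t.length := by
  induction t with
  | nil => simp [editDist]
  | cons y ys ih => simp [editDist] at ih ⊢; omega

lemma editDist_nil_right {α : Type*} [DecidableEq α] (s : List α) :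
    editDist s ([] : List α) = s.length := by
  induction s with
  | nil => simp [editDist]
  | cons x xs ih => simp [editDist] at ih ⊢; omega

lemma editDist_cons_le {α : Type*} [DecidableEq α] (x : α) (xs ys : List α) :
    editDist (x :: xs) ys ≤ 1 + editDist xs ys := by
  cases ys with
  | nil => simp [editDist]
  | cons y ys =>
    have h : editDist (x :: xs) (y :: ys) =
        min (1 + editDist xs (y :: ys)) (min (1 + editDist (x :: xs) ys)
          ((if x = y then 0 else 1) + editDist xs ys)) := by
      simp [editDist, levenshtein_cons_cons]
    omega

lemma editDist_sublist {α : Type*} [DecidableEq α] {W S : List α} (h : W.Sublist S) :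
    editDist S W + W.length ≤ S.length := by
  induction h with
  | slnil => simp [editDist]
  | @cons l₁ l₂ a h ih =>
    have := editDist_cons_le a l₂ l₁
    simp only [List.length_cons]
    omega
  | @cons_cons l₁ l₂ a h ih =>
    have hstep : editDist (a :: l₂) (a :: l₁) ≤ editDist l₂ l₁ := by
      have h : editDist (a :: l₂) (a :: l₁) =
          min (1 + editDist l₂ (a :: l₁)) (min (1 + editDist (a :: l₂) l₁)
            ((if a = a then 0 else 1) + editDist l₂ l₁)) := by
        simp [editDist, levenshtein_cons_cons]
      simp at h
      omega
    simp only [List.length_cons]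
    omega
lemma lev_lower_aux {α : Type*} [DecidableEq α] (n : ℕ) : ∀ (S T : List α),
    S.length + T.length ≤ n →
    ∃ W : List α, W.Sublist S ∧ W.Sublist T ∧ S.length ≤ editDist S T + W.length := by
  induction n with
  | zero =>
    intro S T h
    have hS : S = [] := by cases S <;> simp_all
    exact ⟨[], by simp [hS]⟩
  | succ n ih =>
    intro S T h
    match S, T with
    | [], T => exact ⟨[], by simp⟩
    | x :: xs, [] =>
      exact ⟨[], List.nil_sublist _, List.nil_sublist _, by rw [editDist_nil_right]; simp⟩
    | x :: xs, y :: ys =>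
      obtain ⟨W₁, h1s, h1t, h1⟩ := ih xs (y :: ys) (by simp at h ⊢; omega)
      obtain ⟨W₂, h2s, h2t, h2⟩ := ih (x :: xs) ys (by simp at h ⊢; omega)
      obtain ⟨W₃, h3s, h3t, h3⟩ := ih xs ys (by simp at h ⊢; omega)
      have hh : editDist (x :: xs) (y :: ys) =
          min (1 + editDist xs (y :: ys)) (min (1 + editDist (x :: xs) ys)
            ((if x = y then 0 else 1) + editDist xs ys)) := by
        simp [editDist, levenshtein_cons_cons]
      have habc : editDist (x :: xs) (y :: ys) = 1 + editDist xs (y :: ys) ∨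
          editDist (x :: xs) (y :: ys) = 1 + editDist (x :: xs) ys ∨
          editDist (x :: xs) (y :: ys) = (if x = y then 0 else 1) + editDist xs ys := by
        omega
      clear hh
      simp only [List.length_cons] at h1 h2 h3
      rcases habc with he | he | he
      · exact ⟨W₁, h1s.cons x, h1t, by simp only [List.length_cons]; omega⟩
      · exact ⟨W₂, h2s, h2t.cons y, by simp only [List.length_cons]; omega⟩
      · by_cases hxy : x = y
        · subst hxy
          simp only [if_pos rfl] at he
          exact ⟨x :: W₃, h3s.cons₂ x, h3t.cons₂ x, by simp only [List.length_cons]; omega⟩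
        · simp only [if_neg hxy] at he
          exact ⟨W₃, h3s.cons x, h3t.cons y, by simp only [List.length_cons]; omega⟩

lemma lev_lower {α : Type*} [DecidableEq α] (S T : List α) :
    ∃ W : List α, W.Sublist S ∧ W.Sublist T ∧ S.length ≤ editDist S T + W.length :=
  lev_lower_aux (S.length + T.length) S T le_rfl

lemma common_refine {α : Type*} {k : ℕ} : ∀ (T : List α) (W : Fin k → List α),
    (∀ i, (W i).Sublist T) →
    ∃ V : List α, (∀ i, V.Sublist (W i)) ∧
      ∑ i, (W i).length ≤ (k - 1) * T.length + V.length := by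
  intro T
  induction T with
  | nil =>
    intro W hW
    refine ⟨[], fun i => ?_, ?_⟩
    · rw [List.sublist_nil.mp (hW i)]
    · have : ∀ i ∈ Finset.univ, (W i).length = 0 := fun i _ => by
        rw [List.sublist_nil.mp (hW i)]; rfl
      rw [Finset.sum_congr rfl this]
      simp
  | cons t T' ihT =>
    intro W hW
    classical
    by_cases hj : ∃ j, (W j).Sublist T'
    · obtain ⟨j, hjT⟩ := hj
      set U : Fin k → List α := fun i => if (W i).Sublist T' then W i else (W i).tail with hU
      have hUT : ∀ i, (U i).Sublist T' := by
        intro i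
        by_cases h : (W i).Sublist T'
        · simp only [hU]; rw [if_pos h]; exact h
        · rcases List.sublist_cons_iff.mp (hW i) with h' | ⟨r, hr, hrT⟩
          · exact absurd h' h
          · simp only [hU]; rw [if_neg h, hr]; exact hrT
      have hUW : ∀ i, (U i).Sublist (W i) := by
        intro i
        by_cases h : (W i).Sublist T'
        · simp only [hU]; rw [if_pos h]
        · simp only [hU]; rw [if_neg h]; exact List.tail_sublist _
      have hlen1 : ∀ i ∈ Finset.univ, (W i).length ≤ (U i).length + 1 := by
        intro i _
        by_cases h : (W i).Sublist T'
        · simp only [hU]; rw [if_pos h]; omega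
        · simp only [hU]; rw [if_neg h]; rw [List.length_tail]; omega
      have hlenj : (W j).length < (U j).length + 1 := by
        simp only [hU]; rw [if_pos hjT]; omega
      obtain ⟨V, hV, hVsum⟩ := ihT U hUT
      refine ⟨V, fun i => (hV i).trans (hUW i), ?_⟩
      have hsum : ∑ i, (W i).length < ∑ i, ((U i).length + 1) :=
        Finset.sum_lt_sum hlen1 ⟨j, Finset.mem_univ j, hlenj⟩
      have hsum2 : ∑ i, ((U i).length + 1) = (∑ i, (U i).length) + k := by
        rw [Finset.sum_add_distrib]; simp
      have hmul : (k - 1) * (T'.length + 1) = (k - 1) * T'.length + (k - 1) := by ring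
      simp only [List.length_cons, hmul]
      omega
    · push_neg at hj
      have hWc : ∀ i, ∃ r, W i = t :: r ∧ r.Sublist T' := by
        intro i
        rcases List.sublist_cons_iff.mp (hW i) with h' | ⟨r, hr, hrT⟩
        · exact absurd h' (hj i)
        · exact ⟨r, hr, hrT⟩
      choose U hUe hUT using hWc
      obtain ⟨V, hV, hVsum⟩ := ihT U hUT
      refine ⟨t :: V, fun i => ?_, ?_⟩
      · rw [hUe i]; exact (hV i).cons₂ t
      · have hlen : ∀ i ∈ Finset.univ, (W i).length = (U i).length + 1 := fun i _ => by
          rw [hUe i]; rfl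
        rw [Finset.sum_congr rfl hlen, Finset.sum_add_distrib]
        have hmul : (k - 1) * (T'.length + 1) = (k - 1) * T'.length + (k - 1) := by ring
        simp only [List.length_cons, hmul]
        simp only [Finset.sum_const, Finset.card_univ, Fintype.card_fin, smul_eq_mul, mul_one]
        omega

/-- For `k ≥ 1` strings `S₁, …, S_k`, each of length `M`, the median
edit distance of the `(2k−1)`-tuple `S₁, …, S_k, γ, …, γ` (with `k−1` copies of the
empty string `γ`) equals `M·k − LCS(S₁, …, S_k)`. -/
theorem median_edit_distance_with_empty_strings
    {α : Type*} [DecidableEq α] (k M : ℕ) (hk : 1 ≤ k)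
    (S : Fin k → List α) (hlen : ∀ i, (S i).length = M) :
    medianED (List.ofFn S ++ List.replicate (k - 1) ([] : List α)) =
      M * k - lcsLen (List.ofFn S) := by
  classical
  -- the set underlying lcsLen
  set LSet : Set ℕ :=
    { m : ℕ | ∃ T : List α, T.length = m ∧ ∀ s ∈ List.ofFn S, T.Sublist s } with hLSet
  have hL0 : (0 : ℕ) ∈ LSet := ⟨[], rfl, fun s _ => List.nil_sublist s⟩
  have hbdd : BddAbove LSet := by
    refine ⟨M, ?_⟩
    rintro m ⟨T, hT, hsub⟩
    have hmem : S ⟨0, hk⟩ ∈ List.ofFn S := (List.mem_ofFn (f := S)).mpr ⟨⟨0, hk⟩, rfl⟩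
    have := (hsub _ hmem).length_le
    rw [hT, hlen] at this
    exact this
  have hLdef : lcsLen (List.ofFn S) = sSup LSet := rfl
  set L := lcsLen (List.ofFn S) with hLdef'
  obtain ⟨Wst, hWlen, hWsub⟩ : ∃ T : List α, T.length = L ∧ ∀ s ∈ List.ofFn S, T.Sublist s := by
    have := Nat.sSup_mem ⟨0, hL0⟩ hbdd
    rw [← hLdef] at this
    exact this
  have hLM : L ≤ M := by
    have hmem : S ⟨0, hk⟩ ∈ List.ofFn S := (List.mem_ofFn (f := S)).mpr ⟨⟨0, hk⟩, rfl⟩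
    have := (hWsub _ hmem).length_le
    rw [hWlen, hlen] at this
    exact this
  -- computing the sum for a given target T
  have hmap : ∀ T : List α,
      ((List.ofFn S ++ List.replicate (k - 1) ([] : List α)).map fun s => editDist s T).sum
        = (∑ i, editDist (S i) T) + (k - 1) * T.length := by
    intro T
    rw [List.map_append, List.sum_append, List.map_ofFn, List.sum_ofFn, List.map_replicate,
      List.sum_replicate, smul_eq_mul, editDist_nil_left]
    rfl
  apply le_antisymm
  · -- upper bound: use Wst as the target
    have hmem : ((List.ofFn S ++ List.replicate (k - 1) ([] : List α)).map
        fun s => editDist s Wst).sum ∈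
        { d : ℕ | ∃ T : List α, d = ((List.ofFn S ++ List.replicate (k - 1)
          ([] : List α)).map fun s => editDist s T).sum } := ⟨Wst, rfl⟩
    refine le_trans (Nat.sInf_le hmem) ?_
    rw [hmap, hWlen]
    have h1 : ∀ i ∈ Finset.univ, editDist (S i) Wst ≤ M - L := by
      intro i _
      have hsubi : Wst.Sublist (S i) := hWsub _ ((List.mem_ofFn (f := S)).mpr ⟨i, rfl⟩)
      have := editDist_sublist hsubi
      rw [hlen i, hWlen] at this
      omega
    have h2 : ∑ i, editDist (S i) Wst ≤ k * (M - L) := by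
      calc ∑ i, editDist (S i) Wst ≤ ∑ _i : Fin k, (M - L) := Finset.sum_le_sum h1
        _ = k * (M - L) := by
          simp [Finset.sum_const, Finset.card_univ, mul_comm]
    have e1 : k * (M - L) = k * M - k * L := Nat.mul_sub k M L
    have e2 : (k - 1) * L = k * L - L := by
      rw [Nat.sub_mul, one_mul]
    have e3 : L ≤ k * L := Nat.le_mul_of_pos_left L hk
    have e4 : k * L ≤ k * M := Nat.mul_le_mul_left k hLM
    have e5 : M * k = k * M := Nat.mul_comm M k
    omega
  · -- lower bound
    refine le_csInf ⟨_, ⟨[], rfl⟩⟩ ?_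
    rintro d ⟨T, rfl⟩
    rw [hmap]
    choose W hWS hWT hW using fun i => lev_lower (S i) T
    obtain ⟨V, hV, hVsum⟩ := common_refine T W hWT
    have hVL : V.length ≤ L := by
      refine le_csSup hbdd ⟨V, rfl, ?_⟩
      intro s hs
      obtain ⟨i, rfl⟩ := (List.mem_ofFn (f := S)).mp hs
      exact (hV i).trans (hWS i)
    have hMk : M * k ≤ (∑ i, editDist (S i) T) + ∑ i, (W i).length := by
      have hi : ∀ i ∈ Finset.univ, M ≤ editDist (S i) T + (W i).length := by
        intro i _
        have := hW i
        rw [hlen i] at this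
        exact this
      calc M * k = ∑ _i : Fin k, M := by
            simp [Finset.sum_const, Finset.card_univ, mul_comm]
        _ ≤ ∑ i, (editDist (S i) T + (W i).length) := Finset.sum_le_sum hi
        _ = _ := Finset.sum_add_distrib
    omega
end

section
/- Let k ≥ 2, let S_1, …, S_k be strings over an alphabet Σ, let a, b ≥ 0 be integers, let @ be a symbol not in Σ, and let #_1, …, #_k be pairwise distinct symbols, none belonging to Σ and all different from @. Define S'_i = @^a · S_i · #_i^b (the string S_i preceded by a copies of @ and followed by b copies of #_i). Then LCS(S'_1, …, S'_k) = a + LCS(S_1, …, S_k). -/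
/-- Let `k ≥ 2`, let `S₁, …, S_k` be strings over an alphabet `Σ`,
let `a, b ≥ 0`, let `@` be a symbol not in `Σ`, and let `#₁, …, #_k` be pairwise distinct
symbols not in `Σ` and all different from `@`.  With `S'ᵢ = @^a · Sᵢ · #ᵢ^b`, we have
`LCS(S'₁, …, S'_k) = a + LCS(S₁, …, S_k)`. -/
theorem lcs_padded_with_fresh_symbols
    {β : Type*} (k : ℕ) (hk : 2 ≤ k)
    (Sig : Set β) (S : Fin k → List β) (hS : ∀ i, ∀ c ∈ S i, c ∈ Sig)
    (a b : ℕ) (atSym : β) (hash : Fin k → β)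
    (hat : atSym ∉ Sig) (hhash : ∀ i, hash i ∉ Sig)
    (hinj : Function.Injective hash) (hne : ∀ i, hash i ≠ atSym) :
    lcsLen (List.ofFn fun i =>
        List.replicate a atSym ++ S i ++ List.replicate b (hash i)) =
      a + lcsLen (List.ofFn S) := by
  classical
  have hk0 : 0 < k := by omega
  set P : Fin k → List β :=
    fun i => List.replicate a atSym ++ S i ++ List.replicate b (hash i) with hPdef
  set A : Set ℕ := { m : ℕ | ∃ T : List β, T.length = m ∧ ∀ s ∈ List.ofFn S, T.Sublist s }
    with hAdef
  set A' : Set ℕ := { m : ℕ | ∃ T : List β, T.length = m ∧ ∀ s ∈ List.ofFn P, T.Sublist s }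
    with hA'def
  have hAne : A.Nonempty := ⟨0, [], rfl, fun s _ => List.nil_sublist s⟩
  have hA'ne : A'.Nonempty := ⟨0, [], rfl, fun s _ => List.nil_sublist s⟩
  have hAbdd : BddAbove A := by
    refine ⟨(S ⟨0, hk0⟩).length, fun m hm => ?_⟩
    obtain ⟨T, rfl, hsub⟩ := hm
    exact (hsub _ (List.mem_ofFn.2 ⟨⟨0, hk0⟩, rfl⟩)).length_le
  have hA'bdd : BddAbove A' := by
    refine ⟨(P ⟨0, hk0⟩).length, fun m hm => ?_⟩
    obtain ⟨T, rfl, hsub⟩ := hm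
    exact (hsub _ (List.mem_ofFn.2 ⟨⟨0, hk0⟩, rfl⟩)).length_le
  have hLCS : lcsLen (List.ofFn S) = sSup A := rfl
  have hLCS' : lcsLen (List.ofFn P) = sSup A' := rfl
  rw [hLCS, hLCS']
  -- upper bound
  have hub : ∀ m ∈ A', m ≤ a + sSup A := by
    intro m hm
    obtain ⟨T, rfl, hsub⟩ := hm
    have hsub' : ∀ i : Fin k,
        T.Sublist (List.replicate a atSym ++ S i ++ List.replicate b (hash i)) := by
      intro i
      exact hsub _ (List.mem_ofFn.2 ⟨i, rfl⟩)
    -- every element of T is atSym or in Sig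
    have hmemT : ∀ c ∈ T, c = atSym ∨ c ∈ Sig := by
      intro c hc
      have h0 := (hsub' ⟨0, hk0⟩).subset hc
      have h1 := (hsub' ⟨1, hk⟩).subset hc
      simp only [List.mem_append, List.mem_replicate] at h0 h1
      rcases h0 with ((h | h) | h)
      · exact Or.inl h.2
      · exact Or.inr (hS _ _ h)
      · exfalso
        rcases h1 with ((h' | h') | h')
        · exact hne _ (h.2 ▸ h'.2)
        · exact hhash _ (h.2 ▸ hS _ _ h')
        · have : (⟨0, hk0⟩ : Fin k) = ⟨1, hk⟩ := hinj (h.2 ▸ h'.2)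
          simp at this
    set p : β → Bool := fun c => decide (c ≠ atSym) with hp
    set R : List β := T.filter p with hR
    -- R is a common subsequence of all S i
    have hRsub : ∀ i : Fin k, R.Sublist (S i) := by
      intro i
      set q : β → Bool := fun c => decide (c ≠ atSym ∧ c ≠ hash i) with hq
      have h1 : (T.filter q).Sublist
          ((List.replicate a atSym ++ S i ++ List.replicate b (hash i)).filter q) :=
        (hsub' i).filter q
      have h2 : (List.replicate a atSym ++ S i ++ List.replicate b (hash i)).filter q
          = S i := by
        rw [List.filter_append, List.filter_append, List.filter_replicate,
          List.filter_replicate]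
        have hq1 : q atSym = false := by simp [hq]
        have hq2 : q (hash i) = false := by simp [hq]
        rw [hq1, hq2]
        simp only [Bool.false_eq_true, if_false, List.nil_append, List.append_nil]
        rw [List.filter_eq_self]
        intro c hc
        have hc1 : c ≠ atSym := fun h => hat (h ▸ hS _ _ hc)
        have hc2 : c ≠ hash i := fun h => hhash i (h ▸ hS _ _ hc)
        simp [hq, hc1, hc2]
      have h3 : T.filter q = R := by
        rw [hR]
        apply List.filter_congr
        intro c hc
        rcases hmemT c hc with h | h
        · simp [hq, hp, h]
        · have hc1 : c ≠ atSym := fun h' => hat (h' ▸ h)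
          have hc2 : c ≠ hash i := fun h' => hhash i (h' ▸ h)
          simp [hq, hp, hc1, hc2]
      rw [← h3, ← h2]
      exact h1
    have hRA : R.length ∈ A := ⟨R, rfl, by
      rw [List.forall_mem_ofFn_iff]
      exact hRsub⟩
    have hRle : R.length ≤ sSup A := le_csSup hAbdd hRA
    -- count of atSym in T is at most a
    have hlen : T.length = T.countP p + T.countP (fun c => !p c) := by
      rw [List.length_eq_countP_add_countP p]
      congr 1
      apply List.countP_congr
      intro c _
      simp [hp]
    have hcount : T.countP (fun c => !p c) ≤ a := by
      have h1 : T.countP (fun c => !p c)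
          ≤ (List.replicate a atSym ++ S ⟨0, hk0⟩
              ++ List.replicate b (hash ⟨0, hk0⟩)).countP (fun c => !p c) :=
        (hsub' ⟨0, hk0⟩).countP_le
      have h2 : (S ⟨0, hk0⟩).countP (fun c => !p c) = 0 := by
        rw [List.countP_eq_zero]
        intro c hc
        have : c ≠ atSym := fun h => hat (h ▸ hS _ _ hc)
        simp [hp, this]
      have h3 : (List.replicate b (hash ⟨0, hk0⟩)).countP (fun c => !p c) = 0 := by
        rw [List.countP_eq_zero]
        intro c hc
        rw [List.mem_replicate] at hc
        simp [hp, hc.2, hne]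
      have h4 : (List.replicate a atSym).countP (fun c => !p c)
          ≤ (List.replicate a atSym).length := List.countP_le_length
      rw [List.countP_append, List.countP_append, h2, h3] at h1
      simpa using h1.trans (by simpa using h4)
    have hRlen : R.length = T.countP p := List.countP_eq_length_filter.symm
    omega
  -- lower bound
  have hlb : a + sSup A ∈ A' := by
    obtain ⟨T, hTlen, hTsub⟩ := Nat.sSup_mem hAne hAbdd
    refine ⟨List.replicate a atSym ++ T, by simp [hTlen], ?_⟩
    rw [List.forall_mem_ofFn_iff]
    intro i
    have hT : T.Sublist (S i) := hTsub _ (List.mem_ofFn.2 ⟨i, rfl⟩)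
    have : T.Sublist (S i ++ List.replicate b (hash i)) :=
      hT.trans (List.sublist_append_left _ _)
    have h := (List.Sublist.refl (List.replicate a atSym)).append this
    rw [← List.append_assoc] at h
    exact h
  have h1 : sSup A' ≤ a + sSup A := csSup_le hA'ne hub
  have h2 : a + sSup A ≤ sSup A' := le_csSup hA'bdd hlb
  omega
end

section
/- Let k ≥ 2 and let H : [1..2^k] → {0,1}^k be a bijection such that H(2^k) is the all-ones vector. Over the three-symbol alphabet {0, 1, %}, for i ∈ [1..k] and b ∈ {0,1} define the string h_{b,i} of length 2^k by: h_{b,i}[j] = 1 if H(j)(i) = b and j ≠ 2^k; h_{b,i}[j] = 0 if i < k and the previous condition fails; h_{b,i}[j] = % if i = k and the first condition fails. Then for all bits b_1, …, b_k ∈ {0,1}, the number of positions j ∈ [1..2^k] at which h_{b_1,1}[j] = h_{b_2,2}[j] = ⋯ = h_{b_k,k}[j] equals 0 if b_1 = b_2 = ⋯ = b_k = 1, and equals 1 otherwise. -/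
/-- the single-character selector strings `h_{b,i}`.
Here the three-symbol alphabet `{0, 1, %}` is modelled as `Fin 3`, with `0 ↦ 0`,
`1 ↦ 1` and `% ↦ 2`; positions are 0-indexed, so the 1-indexed position `2^k`
corresponds to the last index `2^k − 1`, and the 1-indexed condition `i < k` on
`i ∈ [1..k]` corresponds to `(i : ℕ) < k − 1` for `i : Fin k`. -/
theorem selector_string_match_count
    (k : ℕ) (hk : 2 ≤ k)
    (H : Fin (2 ^ k) → (Fin k → Bool)) (hH : Function.Bijective H)
    (hlast : H ⟨2 ^ k - 1, Nat.sub_lt (Nat.two_pow_pos k) one_pos⟩ = fun _ => true)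
    (b : Fin k → Bool) :
    let lastIdx : Fin (2 ^ k) := ⟨2 ^ k - 1, Nat.sub_lt (Nat.two_pow_pos k) one_pos⟩
    let h : Bool → Fin k → Fin (2 ^ k) → Fin 3 := fun bb i j =>
      if H j i = bb ∧ j ≠ lastIdx then 1
      else if (i : ℕ) < k - 1 then 0 else 2
    (Finset.univ.filter fun j : Fin (2 ^ k) =>
        ∀ i i' : Fin k, h (b i) i j = h (b i') i' j).card =
      if ∀ i, b i = true then 0 else 1 := by
  intro lastIdx h
  have hi0lt : (0 : ℕ) < k := by omega
  have hiklt : k - 1 < k := by omega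
  have key : ∀ j : Fin (2 ^ k),
      (∀ i i' : Fin k, h (b i) i j = h (b i') i' j) ↔ (H j = b ∧ j ≠ lastIdx) := by
    intro j
    constructor
    · intro hall
      by_cases hcase : ∀ i : Fin k, H j i = b i ∧ j ≠ lastIdx
      · exact ⟨funext fun i => (hcase i).1, (hcase ⟨0, hi0lt⟩).2⟩
      · exfalso
        push_neg at hcase
        obtain ⟨i0, hi0⟩ := hcase
        rcases Classical.em (H j i0 = b i0) with h1 | h1
        · -- then j = lastIdx
          have hj : j = lastIdx := hi0 h1
          have h0 := hall ⟨0, hi0lt⟩ ⟨k - 1, hiklt⟩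
          simp only [h, hj] at h0
          have hb0 : ¬ (H lastIdx ⟨0, hi0lt⟩ = b ⟨0, hi0lt⟩ ∧ lastIdx ≠ lastIdx) :=
            fun hc => hc.2 rfl
          have hbk : ¬ (H lastIdx ⟨k - 1, hiklt⟩ = b ⟨k - 1, hiklt⟩ ∧ lastIdx ≠ lastIdx) :=
            fun hc => hc.2 rfl
          rw [if_neg hb0, if_neg hbk, if_pos (show (0 : ℕ) < k - 1 by omega),
            if_neg (show ¬ ((k - 1 : ℕ) < k - 1) by omega)] at h0
          exact absurd h0 (by decide)
        · -- value at i0 is not 1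
          have hne : ¬ (H j i0 = b i0 ∧ j ≠ lastIdx) := fun hc => h1 hc.1
          rcases Classical.em ((i0 : ℕ) < k - 1) with h2 | h2
          · have h0 := hall i0 ⟨k - 1, hiklt⟩
            simp only [h, if_neg hne, if_pos h2,
              if_neg (show ¬ ((k - 1 : ℕ) < k - 1) by omega)] at h0
            split_ifs at h0 <;> exact absurd h0 (by decide)
          · have h0 := hall i0 ⟨0, hi0lt⟩
            simp only [h, if_neg hne, if_neg h2,
              if_pos (show (0 : ℕ) < k - 1 by omega)] at h0
            split_ifs at h0 <;> exact absurd h0 (by decide)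
    · rintro ⟨hHj, hjne⟩ i i'
      simp only [h]
      rw [if_pos (show H j i = b i ∧ j ≠ lastIdx from ⟨congrFun hHj i, hjne⟩),
        if_pos (show H j i' = b i' ∧ j ≠ lastIdx from ⟨congrFun hHj i', hjne⟩)]
  by_cases hb : ∀ i, b i = true
  · rw [if_pos hb, Finset.card_eq_zero]
    ext j
    simp only [Finset.mem_filter, Finset.mem_univ, true_and, Finset.notMem_empty,
      iff_false, key]
    rintro ⟨hHj, hjne⟩
    apply hjne
    apply hH.1
    rw [hHj, hlast]
    exact funext hb
  · rw [if_neg hb]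
    obtain ⟨j₀, hj₀⟩ := hH.2 b
    have hj₀ne : j₀ ≠ lastIdx := by
      intro hc
      apply hb
      intro i
      have := congrFun (hc ▸ hj₀ : H lastIdx = b) i
      rw [hlast] at this
      exact this.symm
    have : (Finset.univ.filter fun j : Fin (2 ^ k) =>
        ∀ i i' : Fin k, h (b i) i j = h (b i') i' j) = {j₀} := by
      ext j
      simp only [Finset.mem_filter, Finset.mem_univ, true_and, Finset.mem_singleton, key]
      constructor
      · rintro ⟨hHj, _⟩
        exact hH.1 (hHj.trans hj₀.symm)
      · rintro rfl
        exact ⟨hj₀, hj₀ne⟩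
    rw [this, Finset.card_singleton]
end

section
/- Let k ≥ 1, let S_1, …, S_k be strings over an alphabet Σ, let c be a symbol not in Σ, and let x ≥ 0 be an integer. Then LCS(S_1 · c^x, S_2 · c^x, …, S_k · c^x) = x + LCS(S_1, …, S_k). -/
lemma lcs_filter_eq {β : Type*} [DecidableEq β] (T₁ : List β) (c : β) (j : ℕ) (h : c ∉ T₁) :
    (T₁ ++ List.replicate j c).filter (fun a => decide (a ≠ c)) = T₁ := by
  rw [List.filter_append, List.filter_eq_self.2, List.filter_eq_nil_iff.2, List.append_nil]
  · intro a ha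
    simp [List.eq_of_mem_replicate ha]
  · intro a ha
    simp only [decide_eq_true_eq]
    rintro rfl; exact h ha

lemma lcs_split_lemma {β : Type*} (A T : List β) (c : β) (hA : c ∉ A) (x : ℕ)
    (h : T.Sublist (A ++ List.replicate x c)) :
    ∃ T₁ j, T = T₁ ++ List.replicate j c ∧ T₁.Sublist A ∧ j ≤ x ∧ c ∉ T₁ := by
  rw [List.sublist_append_iff] at h
  obtain ⟨T₁, T₂, rfl, h1, h2⟩ := h
  rw [List.sublist_replicate_iff] at h2
  obtain ⟨j, hj, rfl⟩ := h2
  exact ⟨T₁, j, rfl, h1, hj, fun hmem => hA (h1.mem hmem)⟩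

/-- For `k ≥ 1` strings `S₁, …, S_k` over `Σ`, a symbol `c ∉ Σ`, and
`x ≥ 0`: `LCS(S₁·c^x, …, S_k·c^x) = x + LCS(S₁, …, S_k)`. -/
theorem lcs_append_fresh_block
    {β : Type*} (k : ℕ) (hk : 1 ≤ k)
    (Sig : Set β) (S : Fin k → List β) (hS : ∀ i, ∀ ch ∈ S i, ch ∈ Sig)
    (c : β) (hc : c ∉ Sig) (x : ℕ) :
    lcsLen (List.ofFn fun i => S i ++ List.replicate x c) =
      x + lcsLen (List.ofFn S) := by
  classical
  have hcS : ∀ i : Fin k, c ∉ S i := fun i hm => hc (hS i c hm)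
  set P : Set ℕ := { m : ℕ | ∃ T : List β, T.length = m ∧ ∀ s ∈ List.ofFn S, T.Sublist s }
    with hP
  set P' : Set ℕ := { m : ℕ | ∃ T : List β, T.length = m ∧
      ∀ s ∈ List.ofFn (fun i => S i ++ List.replicate x c), T.Sublist s } with hP'
  have i0 : Fin k := ⟨0, hk⟩
  have hne : P.Nonempty := ⟨0, [], rfl, fun s _ => List.nil_sublist s⟩
  have hne' : P'.Nonempty := ⟨0, [], rfl, fun s _ => List.nil_sublist s⟩
  have hbdd : BddAbove P := by
    refine ⟨(S i0).length, fun m hm => ?_⟩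
    obtain ⟨T, hlen, hsub⟩ := hm
    have := (hsub (S i0) (List.mem_ofFn.2 ⟨i0, rfl⟩)).length_le
    omega
  have hbdd' : BddAbove P' := by
    refine ⟨(S i0).length + x, fun m hm => ?_⟩
    obtain ⟨T, hlen, hsub⟩ := hm
    have := (hsub (S i0 ++ List.replicate x c)
      (List.mem_ofFn.2 ⟨i0, rfl⟩)).length_le
    simp [List.length_append] at this
    omega
  show sSup P' = x + sSup P
  apply le_antisymm
  · apply csSup_le hne'
    rintro m ⟨T, hlen, hsub⟩
    obtain ⟨T₁, j, hTeq, hsub0, hj, hcT₁⟩ :=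
      lcs_split_lemma (S i0) T c (hcS i0) x
        (hsub _ (List.mem_ofFn.2 ⟨i0, rfl⟩))
    have hT₁all : ∀ i : Fin k, T₁.Sublist (S i) := by
      intro i
      obtain ⟨T₁', j', hTeq', hsub', hj', hcT₁'⟩ :=
        lcs_split_lemma (S i) T c (hcS i) x
          (hsub _ (List.mem_ofFn.2 ⟨i, rfl⟩))
      have : T₁ = T₁' := by
        have h1 := lcs_filter_eq T₁ c j hcT₁
        have h2 := lcs_filter_eq T₁' c j' hcT₁'
        rw [← hTeq] at h1; rw [← hTeq'] at h2
        rw [← h1, ← h2]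
      rwa [this]
    have hmem : T₁.length ∈ P := ⟨T₁, rfl, by
      intro s hs
      obtain ⟨i, rfl⟩ := List.mem_ofFn.1 hs
      exact hT₁all i⟩
    have hle := le_csSup hbdd hmem
    have : m = T₁.length + j := by
      rw [← hlen, hTeq]; simp
    omega
  · obtain ⟨T, hlen, hsub⟩ := Nat.sSup_mem hne hbdd
    have hmem : (x + sSup P) ∈ P' := by
      refine ⟨T ++ List.replicate x c, by simp [hlen]; omega, ?_⟩
      intro s hs
      obtain ⟨i, rfl⟩ := List.mem_ofFn.1 hs
      exact (hsub (S i) (List.mem_ofFn.2 ⟨i, rfl⟩)).append (List.Sublist.refl _)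
    exact le_csSup hbdd' hmem
end
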